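/- Fix an integer k ≥ 1. There exist N₀ ∈ ℕ and C > 0 such that for all N ≥ N₀ the matrix kΓ − NQ is invertible and, writing F_{N,k} := (kΓ − NQ)^{-1} and E := (I − (1/γ⋆)·𝟏π^TΓ)·D·(I − (1/γ⋆)·γπ^T), one has ‖F_{N,k} − (1/(kγ⋆))·𝟏π^T − (1/N)·E‖ ≤ C/N². -/

import Mathlib

open Matrix

attribute [local instance] Matrix.normedAddCommGroup
attribute [local instance] Matrix.normedSpace

lemma aux_norm_mul {d : ℕ} (A B : Matrix (Fin d) (Fin d) ℝ) :
    ‖A * B‖ ≤ d * ‖A‖ * ‖B‖ := by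
  have h0 : (0:ℝ) ≤ d * ‖A‖ * ‖B‖ := by positivity
  rw [Matrix.norm_le_iff h0]
  intro i j
  rw [Matrix.mul_apply]
  calc ‖∑ l, A i l * B l j‖ ≤ ∑ l, ‖A i l * B l j‖ := norm_sum_le _ _
    _ ≤ ∑ _l : Fin d, ‖A‖ * ‖B‖ := by
        refine Finset.sum_le_sum fun l _ => ?_
        rw [norm_mul]
        exact mul_le_mul (A.norm_entry_le_entrywise_sup_norm)
          (B.norm_entry_le_entrywise_sup_norm) (norm_nonneg _) (norm_nonneg _)
    _ = d * ‖A‖ * ‖B‖ := by simp [mul_assoc]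

lemma aux_arith (k N a c : ℝ) (hN : 0 < N) :
    (k/N)*(1/N)*a + (k/N)*(k/N)*c = (k*a + k*k*c)/N^2 := by
  rw [eq_div_iff (by positivity : (N:ℝ)^2 ≠ 0)]
  field_simp

lemma aux_unit {d : ℕ} (T : Matrix (Fin d) (Fin d) ℝ) :
    ∃ ε > (0:ℝ), ∀ x : ℝ, |x| < ε → IsUnit (1 + x • T) := by
  have hc : Continuous fun x : ℝ => ((1 : Matrix (Fin d) (Fin d) ℝ) + x • T).det := by
    apply Continuous.matrix_det
    exact continuous_const.add (continuous_id.smul continuous_const)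
  have h0 : ((1 : Matrix (Fin d) (Fin d) ℝ) + (0:ℝ) • T).det ≠ 0 := by simp
  have := (hc.continuousAt (x := 0)).eventually_ne h0
  rw [Metric.eventually_nhds_iff] at this
  obtain ⟨ε, hε, h⟩ := this
  refine ⟨ε, hε, fun x hx => ?_⟩
  have hd : ((1 : Matrix (Fin d) (Fin d) ℝ) + x • T).det ≠ 0 := by
    apply h; simpa [Real.dist_eq] using hx
  exact (Matrix.isUnit_iff_isUnit_det _).mpr (isUnit_iff_ne_zero.mpr hd)

theorem stmt_0
    (d : ℕ) (hd : 2 ≤ d)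
    (Q : Matrix (Fin d) (Fin d) ℝ) (π lam mu : Fin d → ℝ)
    (hQoff : ∀ i j, i ≠ j → 0 ≤ Q i j)
    (hQrow : ∀ i, ∑ j, Q i j = 0)
    (hrker : ∀ v : Fin d → ℝ, Q.mulVec v = 0 ↔ ∃ c : ℝ, v = c • (1 : Fin d → ℝ))
    (hlker : ∀ w : Fin d → ℝ, Q.vecMul w = 0 ↔ ∃ c : ℝ, w = c • π)
    (hπpos : ∀ i, 0 < π i) (hπsum : ∑ i, π i = 1)
    (hπQ : Q.vecMul π = 0)
    (hlam : ∀ i, 0 ≤ lam i) (hmu : ∀ i, 0 ≤ mu i)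
    (hγpos : ∀ i, 0 < lam i + mu i)
    (hinv : IsUnit (vecMulVec 1 π - Q))
    (k : ℕ) (hk : 1 ≤ k) :
    ∃ N₀ : ℕ, ∃ C : ℝ, 0 < C ∧ ∀ N : ℕ, N₀ ≤ N →
      IsUnit ((k : ℝ) • Matrix.diagonal (fun i => lam i + mu i) - (N : ℝ) • Q) ∧
      ‖((k : ℝ) • Matrix.diagonal (fun i => lam i + mu i) - (N : ℝ) • Q)⁻¹
          - (1 / ((k : ℝ) * (π ⬝ᵥ (lam + mu)))) • vecMulVec 1 π
          - (1 / (N : ℝ)) •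
              ((1 - (1 / (π ⬝ᵥ (lam + mu))) •
                    (vecMulVec 1 π * Matrix.diagonal (fun i => lam i + mu i))) *
                ((vecMulVec 1 π - Q)⁻¹ - vecMulVec 1 π) *
                (1 - (1 / (π ⬝ᵥ (lam + mu))) • vecMulVec (lam + mu) π))‖
        ≤ C / (N : ℝ) ^ 2 := by
  have hdpos : 0 < d := by omega
  have hne : Nonempty (Fin d) := Fin.pos_iff_nonempty.mp hdpos
  set Γ : Matrix (Fin d) (Fin d) ℝ := Matrix.diagonal (fun i => lam i + mu i) with hΓdef
  set J : Matrix (Fin d) (Fin d) ℝ := vecMulVec 1 π with hJdef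
  set gs : ℝ := π ⬝ᵥ (lam + mu) with hgsdef
  set V : Matrix (Fin d) (Fin d) ℝ := vecMulVec (lam + mu) π with hVdef
  set A : Matrix (Fin d) (Fin d) ℝ := J - Q with hAdef
  set Dm : Matrix (Fin d) (Fin d) ℝ := A⁻¹ - J with hDdef
  set Em : Matrix (Fin d) (Fin d) ℝ :=
    (1 - (1/gs) • (J * Γ)) * Dm * (1 - (1/gs) • V) with hEdef
  set T : Matrix (Fin d) (Fin d) ℝ := Γ * Em with hTdef
  set P : Matrix (Fin d) (Fin d) ℝ := (1 / ((k:ℝ) * gs)) • J with hPdef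
  clear_value Γ J gs V A Dm Em T P
  -- basic positivity
  have hgs0 : 0 < gs := by
    rw [hgsdef]
    exact Finset.sum_pos (fun i _ => mul_pos (hπpos i) (hγpos i)) Finset.univ_nonempty
  have hk0 : (0:ℝ) < (k:ℝ) := by exact_mod_cast hk
  have hkgs : (k:ℝ) * gs ≠ 0 := by positivity
  -- algebraic identities
  have hQJ : Q * J = 0 := by
    ext i j
    simp only [hJdef, Matrix.mul_apply, vecMulVec_apply, Pi.one_apply, one_mul,
      Matrix.zero_apply]
    rw [← Finset.sum_mul, hQrow i, zero_mul]
  have hπJ : vecMul π J = π := by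
    ext j
    simp only [hJdef, vecMul, dotProduct, vecMulVec_apply, Pi.one_apply, one_mul]
    rw [← Finset.sum_mul, hπsum, one_mul]
  have hπA : vecMul π A = π := by
    rw [hAdef, Matrix.vecMul_sub, hπJ, hπQ, sub_zero]
  have hAdet : IsUnit A.det := (Matrix.isUnit_iff_isUnit_det A).mp hinv
  have hAAinv : A * A⁻¹ = 1 := Matrix.mul_nonsing_inv A hAdet
  have hπAinv : vecMul π A⁻¹ = π := by
    calc vecMul π A⁻¹ = vecMul (vecMul π A) A⁻¹ := by rw [hπA]
      _ = vecMul π (A * A⁻¹) := by rw [Matrix.vecMul_vecMul]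
      _ = π := by rw [hAAinv, Matrix.vecMul_one]
  have hJmul : ∀ B : Matrix (Fin d) (Fin d) ℝ, J * B = vecMulVec 1 (vecMul π B) := by
    intro B
    ext i j
    simp only [hJdef, Matrix.mul_apply, vecMulVec_apply, Pi.one_apply, one_mul, vecMul,
      dotProduct]
  have hJAinv : J * A⁻¹ = J := by rw [hJmul, hπAinv, ← hJdef]
  have hQAinv : Q * A⁻¹ = J - 1 := by
    have h1 : J * A⁻¹ - Q * A⁻¹ = 1 := by rw [← Matrix.sub_mul, ← hAdef, hAAinv]
    rw [hJAinv] at h1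
    have : Q * A⁻¹ = J - (J - Q * A⁻¹) := by abel
    rw [this, h1]
  have hQD : Q * Dm = J - 1 := by
    rw [hDdef, mul_sub, hQAinv, hQJ, sub_zero]
  have hJV : J * V = gs • J := by
    ext i j
    simp only [hJdef, hVdef, Matrix.mul_apply, vecMulVec_apply, Pi.one_apply, one_mul,
      Matrix.smul_apply, smul_eq_mul, hgsdef, dotProduct]
    rw [Finset.sum_mul]
    exact Finset.sum_congr rfl fun l _ => by ring
  have hΓJ : Γ * J = V := by
    ext i j
    simp only [hΓdef, hJdef, hVdef, Matrix.diagonal_mul, vecMulVec_apply, Pi.one_apply,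
      one_mul, Pi.add_apply]
  have hQE : Q * Em = (1/gs) • V - 1 := by
    have h1 : Q * (1 - (1/gs) • (J * Γ)) = Q := by
      rw [mul_sub, mul_one, Matrix.mul_smul, ← mul_assoc, hQJ, Matrix.zero_mul, smul_zero,
        sub_zero]
    have h2 : Q * Em = Q * Dm * (1 - (1/gs) • V) := by
      rw [hEdef, ← mul_assoc, ← mul_assoc, h1]
    rw [h2, hQD, sub_mul, one_mul, mul_sub, mul_one, Matrix.mul_smul, hJV, smul_smul,
      one_div_mul_cancel hgs0.ne', one_smul]
    abel
  -- J * T = 0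
  have hsumw : ∑ l, π l * (lam + mu) l = gs := by rw [hgsdef]; rfl
  have hJΓ : J * Γ = vecMulVec 1 (fun l => π l * (lam + mu) l) := by
    ext i j
    simp only [hJdef, hΓdef, Matrix.mul_diagonal, vecMulVec_apply, Pi.one_apply, one_mul,
      Pi.add_apply]
  have hJΓJΓ : (J * Γ) * (J * Γ) = gs • (J * Γ) := by
    rw [hJΓ]
    ext i j
    simp only [Matrix.mul_apply, vecMulVec_apply, Pi.one_apply, one_mul, Matrix.smul_apply,
      smul_eq_mul]
    rw [← hsumw, Finset.sum_mul]
  have hJT : J * T = 0 := by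
    have h1 : (J * Γ) * (1 - (1/gs) • (J * Γ)) = 0 := by
      rw [mul_sub, mul_one, Matrix.mul_smul, hJΓJΓ, smul_smul, one_div_mul_cancel hgs0.ne',
        one_smul, sub_self]
    calc J * T = (J * Γ) * ((1 - (1/gs) • (J * Γ)) * (Dm * (1 - (1/gs) • V))) := by
          rw [hTdef, hEdef]; simp only [mul_assoc]
      _ = 0 := by rw [← mul_assoc, h1, Matrix.zero_mul]
  -- the key expansion identity
  obtain ⟨ε, hε, hunit⟩ := aux_unit T
  obtain ⟨N₀, hN₀⟩ := exists_nat_gt ((k:ℝ)/ε + 2*(k:ℝ)*(d:ℝ)*‖T‖ + 1)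
  refine ⟨N₀, (k:ℝ)*‖Em * T‖ + (k:ℝ)*(k:ℝ)*((d:ℝ)*(2*(‖P‖+‖Em‖))*‖T * T‖) + 1, by positivity,
    fun N hN => ?_⟩
  have hNr : ((k:ℝ)/ε + 2*(k:ℝ)*(d:ℝ)*‖T‖ + 1) < (N:ℝ) :=
    lt_of_lt_of_le hN₀ (by exact_mod_cast hN)
  have hkε : 0 ≤ (k:ℝ)/ε := by positivity
  have hTd : 0 ≤ 2*(k:ℝ)*(d:ℝ)*‖T‖ := by positivity
  have hN1 : (1:ℝ) ≤ (N:ℝ) := by linarith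
  have hNpos : (0:ℝ) < (N:ℝ) := by linarith
  set x : ℝ := (k:ℝ)/(N:ℝ) with hxdef
  clear_value x
  have hx0 : 0 < x := by rw [hxdef]; positivity
  have hxε : |x| < ε := by
    rw [abs_of_pos hx0, hxdef, div_lt_iff₀ hNpos]
    have hh : (k:ℝ)/ε < (N:ℝ) := by linarith
    calc (k:ℝ) = ((k:ℝ)/ε) * ε := (div_mul_cancel₀ _ hε.ne').symm
      _ < (N:ℝ) * ε := mul_lt_mul_of_pos_right hh hε
      _ = ε * (N:ℝ) := mul_comm _ _
  have hhalf : x * ((d:ℝ) * ‖T‖) ≤ 1/2 := by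
    rw [hxdef, div_mul_eq_mul_div, div_le_iff₀ hNpos]
    nlinarith [norm_nonneg T]
  set M : Matrix (Fin d) (Fin d) ℝ := (k:ℝ) • Γ - (N:ℝ) • Q with hMdef
  set S : Matrix (Fin d) (Fin d) ℝ := P + (1/(N:ℝ)) • Em with hSdef
  clear_value M S
  have hMS : M * S = 1 + x • T := by
    have e1 : ((k:ℝ) • Γ) * P = (1/gs) • V := by
      rw [hPdef, Matrix.smul_mul, Matrix.mul_smul, smul_smul, hΓJ]
      congr 1
      field_simp
    have e2 : ((k:ℝ) • Γ) * ((1/(N:ℝ)) • Em) = x • T := by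
      rw [Matrix.smul_mul, Matrix.mul_smul, smul_smul, hTdef, hxdef]
      congr 1
      field_simp
    have e3 : ((N:ℝ) • Q) * P = 0 := by
      rw [hPdef, Matrix.smul_mul, Matrix.mul_smul, hQJ, smul_zero, smul_zero]
    have e4 : ((N:ℝ) • Q) * ((1/(N:ℝ)) • Em) = (1/gs) • V - 1 := by
      rw [Matrix.smul_mul, Matrix.mul_smul, smul_smul, mul_one_div,
        div_self hNpos.ne', one_smul, hQE]
    rw [hMdef, hSdef, sub_mul, mul_add, mul_add, e1, e2, e3, e4]
    abel
  have hST : S * T = (1/(N:ℝ)) • (Em * T) := by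
    rw [hSdef, add_mul, hPdef, Matrix.smul_mul, hJT, smul_zero, zero_add, Matrix.smul_mul]
  have hU : IsUnit (1 + x • T) := hunit x hxε
  have hUdet : (1 + x • T).det ≠ 0 := ((Matrix.isUnit_iff_isUnit_det _).mp hU).ne_zero
  have hMdet : M.det ≠ 0 := by
    intro h
    apply hUdet
    rw [← hMS, Matrix.det_mul, h, zero_mul]
  have hMunit : IsUnit M := (Matrix.isUnit_iff_isUnit_det M).mpr (isUnit_iff_ne_zero.mpr hMdet)
  refine ⟨hMunit, ?_⟩
  have hMdetU : IsUnit M.det := isUnit_iff_ne_zero.mpr hMdet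
  have hFM : M⁻¹ * M = 1 := Matrix.nonsing_inv_mul M hMdetU
  set F : Matrix (Fin d) (Fin d) ℝ := M⁻¹ with hFdef
  clear_value F
  have hFS : F - S = (-x) • (F * T) := by
    have h1 : S = F * (M * S) := by rw [← mul_assoc, hFM, one_mul]
    rw [hMS, mul_add, mul_one, Matrix.mul_smul] at h1
    rw [h1, neg_smul]
    abel
  have hF2 : F - S = ((-x)*(1/(N:ℝ))) • (Em * T) + (x*x) • (F * (T * T)) := by
    have h1 : F = S + (-x) • (F * T) := by rw [← hFS]; abel
    calc F - S = (-x) • (F * T) := hFS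
      _ = (-x) • ((S + (-x) • (F * T)) * T) := by rw [← h1]
      _ = (-x) • (S * T + (-x) • (F * T * T)) := by rw [add_mul, Matrix.smul_mul]
      _ = (-x) • ((1/(N:ℝ)) • (Em * T) + (-x) • (F * (T * T))) := by rw [hST, mul_assoc F T T]
      _ = ((-x)*(1/(N:ℝ))) • (Em * T) + (x*x) • (F * (T * T)) := by
          rw [smul_add, smul_smul, smul_smul, neg_mul_neg]
  -- norm bound on F
  have hFT : ‖F * T‖ ≤ (d:ℝ) * ‖F‖ * ‖T‖ := aux_norm_mul F T
  have hSb : ‖S‖ ≤ ‖P‖ + ‖Em‖ := by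
    have hsm : ‖(1/(N:ℝ)) • Em‖ ≤ ‖Em‖ := by
      rw [norm_smul, Real.norm_eq_abs, abs_of_pos (show (0:ℝ) < 1/(N:ℝ) by positivity)]
      exact mul_le_of_le_one_left (norm_nonneg _) (by rw [div_le_one hNpos]; exact hN1)
    calc ‖S‖ ≤ ‖P‖ + ‖(1/(N:ℝ)) • Em‖ := by rw [hSdef]; exact norm_add_le _ _
      _ ≤ ‖P‖ + ‖Em‖ := by linarith
  have hFb : ‖F‖ ≤ 2 * (‖P‖ + ‖Em‖) := by
    have h1 : F = S + (-x) • (F * T) := by rw [← hFS]; abel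
    have h2 : ‖F‖ ≤ ‖S‖ + x * ((d:ℝ) * ‖F‖ * ‖T‖) := by
      calc ‖F‖ = ‖S + (-x) • (F * T)‖ := by rw [← h1]
        _ ≤ ‖S‖ + ‖(-x) • (F * T)‖ := norm_add_le _ _
        _ ≤ ‖S‖ + x * ((d:ℝ) * ‖F‖ * ‖T‖) := by
            gcongr
            rw [norm_smul, Real.norm_eq_abs, abs_neg, abs_of_pos hx0]
            exact mul_le_mul_of_nonneg_left hFT hx0.le
    have h3 : x * ((d:ℝ) * ‖F‖ * ‖T‖) ≤ (1/2) * ‖F‖ := by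
      have : x * ((d:ℝ) * ‖F‖ * ‖T‖) = (x * ((d:ℝ) * ‖T‖)) * ‖F‖ := by ring
      rw [this]
      exact mul_le_mul_of_nonneg_right hhalf (norm_nonneg _)
    have := hSb
    linarith
  -- final estimate
  have hgoal : F - P - (1/(N:ℝ)) • Em = F - S := by rw [hSdef]; abel
  have hbound : ‖F - S‖ ≤ ((k:ℝ)*‖Em * T‖ + (k:ℝ)*(k:ℝ)*((d:ℝ)*(2*(‖P‖+‖Em‖))*‖T * T‖) + 1)
      / (N:ℝ)^2 := by
    rw [hF2]
    have b1 : ‖((-x)*(1/(N:ℝ))) • (Em * T)‖ = x * (1/(N:ℝ)) * ‖Em * T‖ := by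
      rw [norm_smul, Real.norm_eq_abs]
      congr 1
      rw [abs_mul, abs_neg, abs_of_pos hx0, abs_of_pos (by positivity)]
    have b2 : ‖(x*x) • (F * (T * T))‖ ≤ x * x * ((d:ℝ) * (2*(‖P‖+‖Em‖)) * ‖T * T‖) := by
      rw [norm_smul, Real.norm_eq_abs, abs_mul, abs_of_pos hx0]
      have := aux_norm_mul F (T * T)
      calc x * x * ‖F * (T * T)‖ ≤ x * x * ((d:ℝ) * ‖F‖ * ‖T * T‖) := by
            exact mul_le_mul_of_nonneg_left this (by positivity)
        _ ≤ x * x * ((d:ℝ) * (2*(‖P‖+‖Em‖)) * ‖T * T‖) := by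
            gcongr
    calc ‖((-x)*(1/(N:ℝ))) • (Em * T) + (x*x) • (F * (T * T))‖
        ≤ ‖((-x)*(1/(N:ℝ))) • (Em * T)‖ + ‖(x*x) • (F * (T * T))‖ := norm_add_le _ _
      _ ≤ x * (1/(N:ℝ)) * ‖Em * T‖ + x * x * ((d:ℝ) * (2*(‖P‖+‖Em‖)) * ‖T * T‖) := by
          rw [b1]; gcongr
      _ = ((k:ℝ)*‖Em * T‖ + (k:ℝ)*(k:ℝ)*((d:ℝ)*(2*(‖P‖+‖Em‖))*‖T * T‖)) / (N:ℝ)^2 := by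
          rw [hxdef]
          exact aux_arith _ _ _ _ hNpos
      _ ≤ ((k:ℝ)*‖Em * T‖ + (k:ℝ)*(k:ℝ)*((d:ℝ)*(2*(‖P‖+‖Em‖))*‖T * T‖) + 1) / (N:ℝ)^2 := by
          rw [div_le_div_iff_of_pos_right (by positivity : (0:ℝ) < (N:ℝ)^2)]
          linarith
  calc ‖F - P - (1/(N:ℝ)) • Em‖ = ‖F - S‖ := by rw [hgoal]
    _ ≤ _ := hbound
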